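/- If a PPS x = P(x) has greatest fixed point g* in [0,1]^n with g* < 1 in every coordinate, or least fixed point q* in [0,1]^n with q* > 0 in every coordinate, then x = P(x) is an LDF-PPS. -/

import Mathlib

open Filter Topology

/-- A probabilistic polynomial in `n` variables: `∑ r, p r * x ^ expo r`,
with nonnegative coefficients summing to at most 1. -/
structure ProbPoly (n : ℕ) where
  numTerms : ℕ
  p : Fin numTerms → ℝ
  expo : Fin numTerms → Fin n → ℕ
  p_nonneg : ∀ r, 0 ≤ p r
  p_sum_le_one : ∑ r, p r ≤ 1

/-- Evaluation of a probabilistic polynomial. -/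
def ProbPoly.eval {n : ℕ} (P : ProbPoly n) (x : Fin n → ℝ) : ℝ :=
  ∑ r, P.p r * ∏ i, x i ^ P.expo r i

/-- The unit box `[0,1]^n`. -/
def box01 (n : ℕ) : Set (Fin n → ℝ) := {x | ∀ i, 0 ≤ x i ∧ x i ≤ 1}

/-- The minimax value of the zero-sum matrix game with payoff matrix `B`:
`Val(B) = max_{s ∈ Δ_k} min_{t ∈ Δ_m} sᵀ B t`. -/
noncomputable def gameVal {k m : ℕ} (B : Matrix (Fin k) (Fin m) ℝ) : ℝ :=
  ⨆ s : stdSimplex ℝ (Fin k), ⨅ t : stdSimplex ℝ (Fin m),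
    ∑ i : Fin k, ∑ j : Fin m, s.1 i * B i j * t.1 j

/-- A probability distribution on `Fin k`. -/
def IsDist {k : ℕ} (d : Fin k → ℝ) : Prop := (∀ j, 0 ≤ d j) ∧ ∑ j, d j = 1

/-- `g` is the greatest fixed point of `F` in `[0,1]^n`. -/
def IsGFP {n : ℕ} (F : (Fin n → ℝ) → Fin n → ℝ) (g : Fin n → ℝ) : Prop :=
  g ∈ box01 n ∧ F g = g ∧ ∀ g' ∈ box01 n, F g' = g' → g' ≤ g

/-- `q` is the least fixed point of `F` in `[0,1]^n`. -/
def IsLFP {n : ℕ} (F : (Fin n → ℝ) → Fin n → ℝ) (q : Fin n → ℝ) : Prop :=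
  q ∈ box01 n ∧ F q = q ∧ ∀ q' ∈ box01 n, F q' = q' → q ≤ q'

/-- A minimax probabilistic polynomial system (minimax-PPS) in `n` variables:
for each `i`, an `nr i × nc i` matrix of probabilistic polynomials. -/
structure MinimaxPPS (n : ℕ) where
  nr : Fin n → ℕ
  nc : Fin n → ℕ
  nr_pos : ∀ i, 0 < nr i
  nc_pos : ∀ i, 0 < nc i
  q : (i : Fin n) → Fin (nr i) → Fin (nc i) → ProbPoly n

namespace MinimaxPPS

/-- The payoff matrix `A_i(x)`. -/
noncomputable def A {n : ℕ} (P : MinimaxPPS n) (i : Fin n) (x : Fin n → ℝ) :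
    Matrix (Fin (P.nr i)) (Fin (P.nc i)) ℝ :=
  Matrix.of fun j k => (P.q i j k).eval x

/-- `P(x)`: coordinatewise the value of the matrix game `A_i(x)`. -/
noncomputable def eval {n : ℕ} (P : MinimaxPPS n) (x : Fin n → ℝ) : Fin n → ℝ :=
  fun i => gameVal (P.A i x)

/-- The minPPS `P_{σ,*}` obtained by fixing a mixed policy `σ` for the max player. -/
noncomputable def fixMax {n : ℕ} (P : MinimaxPPS n)
    (σ : (i : Fin n) → Fin (P.nr i) → ℝ) (x : Fin n → ℝ) : Fin n → ℝ :=
  fun i => ⨅ k : Fin (P.nc i), ∑ j, σ i j * (P.q i j k).eval x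

/-- The maxPPS `P_{*,τ}` obtained by fixing a mixed policy `τ` for the min player. -/
noncomputable def fixMin {n : ℕ} (P : MinimaxPPS n)
    (τ : (i : Fin n) → Fin (P.nc i) → ℝ) (x : Fin n → ℝ) : Fin n → ℝ :=
  fun i => ⨆ j : Fin (P.nr i), ∑ k, τ i k * (P.q i j k).eval x

/-- The PPS `P_{σ,τ}` obtained by fixing both policies. -/
def fixBoth {n : ℕ} (P : MinimaxPPS n)
    (σ : (i : Fin n) → Fin (P.nr i) → ℝ) (τ : (i : Fin n) → Fin (P.nc i) → ℝ)
    (x : Fin n → ℝ) : Fin n → ℝ :=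
  fun i => ∑ j, ∑ k, σ i j * τ i k * (P.q i j k).eval x

end MinimaxPPS

/-- A PPS: each coordinate is a probabilistic polynomial. -/
structure PPS (n : ℕ) where
  poly : Fin n → ProbPoly n

namespace PPS

def eval {n : ℕ} (P : PPS n) (x : Fin n → ℝ) : Fin n → ℝ := fun i => (P.poly i).eval x

/-- Edge of the dependency graph: `x_j` appears (with a nonzero coefficient) in `P_i(x)`. -/
def depends {n : ℕ} (P : PPS n) (i j : Fin n) : Prop :=
  ∃ r, (P.poly i).p r ≠ 0 ∧ (P.poly i).expo r j ≠ 0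

end PPS

/-- A probabilistic polynomial is linear degenerate: every term with nonzero coefficient
has total degree exactly 1 (so it is linear with no constant term), and the
coefficients sum to exactly 1. -/
def IsLDPoly {n : ℕ} (Q : ProbPoly n) : Prop :=
  (∀ r, Q.p r ≠ 0 → ∑ j, Q.expo r j = 1) ∧ ∑ r, Q.p r = 1

/-- There exists a bottom strongly connected component of the dependency relation `dep`
all of whose members satisfy `ld`. -/
def IsLDBottom {n : ℕ} (dep : Fin n → Fin n → Prop) (ld : Fin n → Prop) : Prop :=
  ∃ S : Set (Fin n), S.Nonempty ∧
    (∀ i ∈ S, ∀ j ∈ S, Relation.ReflTransGen dep i j) ∧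
    (∀ i ∈ S, ∀ j, dep i j → j ∈ S) ∧
    (∀ i ∈ S, ld i)

/-- A PPS is linear degenerate free (LDF): no bottom strongly connected component of its
dependency graph induces an LD subsystem. -/
def PPS.IsLDF {n : ℕ} (P : PPS n) : Prop :=
  ¬ IsLDBottom P.depends (fun i => IsLDPoly (P.poly i))

namespace MinimaxPPS

/-- Dependency relation of the PPS `P_{σ,τ}`. -/
def dependsMix {n : ℕ} (P : MinimaxPPS n) (σ : (i : Fin n) → Fin (P.nr i) → ℝ)
    (τ : (i : Fin n) → Fin (P.nc i) → ℝ) (i j : Fin n) : Prop :=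
  ∃ a b r, σ i a ≠ 0 ∧ τ i b ≠ 0 ∧ (P.q i a b).p r ≠ 0 ∧ (P.q i a b).expo r j ≠ 0

/-- Coordinate `i` of the PPS `P_{σ,τ}` is linear degenerate. -/
def IsLDMixAt {n : ℕ} (P : MinimaxPPS n) (σ : (i : Fin n) → Fin (P.nr i) → ℝ)
    (τ : (i : Fin n) → Fin (P.nc i) → ℝ) (i : Fin n) : Prop :=
  (∀ a b r, σ i a ≠ 0 → τ i b ≠ 0 → (P.q i a b).p r ≠ 0 → ∑ j, (P.q i a b).expo r j = 1) ∧
  (∑ a, ∑ b, σ i a * τ i b * ∑ r, (P.q i a b).p r) = 1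

/-- A mixed min-player policy `τ` is LDF if for every mixed max-player policy `σ`
the PPS `P_{σ,τ}` is an LDF-PPS. -/
def IsLDFPolicy {n : ℕ} (P : MinimaxPPS n) (τ : (i : Fin n) → Fin (P.nc i) → ℝ) : Prop :=
  ∀ σ : (i : Fin n) → Fin (P.nr i) → ℝ, (∀ i, IsDist (σ i)) →
    ¬ IsLDBottom (P.dependsMix σ τ) (P.IsLDMixAt σ τ)

end MinimaxPPS

/-- The three forms of equations in an SNF minimax-PPS. -/
inductive SNFForm | L | Q | M
  deriving DecidableEq

/-- A minimax-PPS in simple normal form (SNF): each coordinate is of form L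
(linear, `a0 i + ∑ j, a i j * x j`), form Q (`x (quadL i) * x (quadR i)`), or
form M (the value of a matrix game each of whose entries is a variable or the
constant 1, encoded by `Option (Fin n)` with `none` standing for `1`). -/
structure SNFPPS (n : ℕ) where
  form : Fin n → SNFForm
  a0 : Fin n → ℝ
  a : Fin n → Fin n → ℝ
  quadL : Fin n → Fin n
  quadR : Fin n → Fin n
  nr : Fin n → ℕ
  nc : Fin n → ℕ
  nr_pos : ∀ i, 0 < nr i
  nc_pos : ∀ i, 0 < nc i
  entry : (i : Fin n) → Fin (nr i) → Fin (nc i) → Option (Fin n)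
  a0_nonneg : ∀ i, 0 ≤ a0 i
  a_nonneg : ∀ i j, 0 ≤ a i j
  a_sum_le_one : ∀ i, a0 i + ∑ j, a i j ≤ 1

namespace SNFPPS

noncomputable def eval {n : ℕ} (P : SNFPPS n) (x : Fin n → ℝ) : Fin n → ℝ := fun i =>
  match P.form i with
  | SNFForm.L => P.a0 i + ∑ j, P.a i j * x j
  | SNFForm.Q => x (P.quadL i) * x (P.quadR i)
  | SNFForm.M => gameVal (Matrix.of fun j k => (P.entry i j k).elim 1 x)

/-- The maxPPS `P_{*,τ}` obtained by fixing a mixed policy `τ` for the min player. -/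
noncomputable def fixMin {n : ℕ} (P : SNFPPS n)
    (τ : (i : Fin n) → Fin (P.nc i) → ℝ) (x : Fin n → ℝ) : Fin n → ℝ := fun i =>
  match P.form i with
  | SNFForm.L => P.a0 i + ∑ j, P.a i j * x j
  | SNFForm.Q => x (P.quadL i) * x (P.quadR i)
  | SNFForm.M => ⨆ j : Fin (P.nr i), ∑ k, τ i k * (P.entry i j k).elim 1 x

/-- The minPPS `P_{σ,*}` obtained by fixing a mixed policy `σ` for the max player. -/
noncomputable def fixMax {n : ℕ} (P : SNFPPS n)
    (σ : (i : Fin n) → Fin (P.nr i) → ℝ) (x : Fin n → ℝ) : Fin n → ℝ := fun i =>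
  match P.form i with
  | SNFForm.L => P.a0 i + ∑ j, P.a i j * x j
  | SNFForm.Q => x (P.quadL i) * x (P.quadR i)
  | SNFForm.M => ⨅ k : Fin (P.nc i), ∑ j, σ i j * (P.entry i j k).elim 1 x

/-- `S` is closed under the rules defining the least closure set: it contains every
deficient form-L variable, and is closed under rules (a) and (b). -/
def Closed {n : ℕ} (P : SNFPPS n) (S : Set (Fin n)) : Prop :=
  (∀ i, P.form i = SNFForm.L → P.a0 i + ∑ j, P.a i j < 1 → i ∈ S) ∧
  (∀ i, P.form i = SNFForm.L → (∃ j ∈ S, P.a i j ≠ 0) → i ∈ S) ∧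
  (∀ i, P.form i = SNFForm.Q → (P.quadL i ∈ S ∨ P.quadR i ∈ S) → i ∈ S) ∧
  (∀ i, P.form i = SNFForm.M →
    (∀ r : Fin (P.nr i), ∃ c : Fin (P.nc i), ∃ v ∈ S, P.entry i r c = some v) → i ∈ S)

/-- The least closure set `S`. -/
def leastClosure {n : ℕ} (P : SNFPPS n) : Set (Fin n) := ⋂₀ {S | P.Closed S}

end SNFPPS

/-- Labels for the three sets in the limit-sure construction: `s` (the set `S ∪ {1}`),
`f` (the set `F`), and `o` (the remaining set `O`). -/
inductive Lab | s | f | o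
  deriving DecidableEq


lemma ProbPoly.eval_nonneg' {n : ℕ} (Q : ProbPoly n) {x : Fin n → ℝ}
    (hx : ∀ i, 0 ≤ x i) : 0 ≤ Q.eval x :=
  Finset.sum_nonneg fun r _ => mul_nonneg (Q.p_nonneg r)
    (Finset.prod_nonneg fun i _ => pow_nonneg (hx i) _)

lemma ProbPoly.eval_le_one' {n : ℕ} (Q : ProbPoly n) {x : Fin n → ℝ}
    (hx : x ∈ box01 n) : Q.eval x ≤ 1 := by
  refine le_trans (Finset.sum_le_sum fun r _ => ?_) Q.p_sum_le_one
  have h1 : ∏ i, x i ^ Q.expo r i ≤ 1 :=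
    Finset.prod_le_one (fun i _ => pow_nonneg (hx i).1 _)
      (fun i _ => pow_le_one₀ (hx i).1 (hx i).2)
  exact mul_le_of_le_one_right (Q.p_nonneg r) h1

lemma ProbPoly.eval_mono' {n : ℕ} (Q : ProbPoly n) {x y : Fin n → ℝ}
    (hx : ∀ i, 0 ≤ x i) (hxy : x ≤ y) : Q.eval x ≤ Q.eval y :=
  Finset.sum_le_sum fun r _ => mul_le_mul_of_nonneg_left
    (Finset.prod_le_prod (fun i _ => pow_nonneg (hx i) _)
      (fun i _ => pow_le_pow_left₀ (hx i) (hxy i) _)) (Q.p_nonneg r)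

/-- If a PPS has greatest fixed point `g* < 1` in every coordinate, or
least fixed point `q* > 0` in every coordinate, then it is an LDF-PPS. -/
theorem pps_LDF_of_GFP_lt_one_or_LFP_pos {n : ℕ} (P : PPS n)
    (h : (∃ g, IsGFP P.eval g ∧ ∀ i, g i < 1) ∨
         (∃ q, IsLFP P.eval q ∧ ∀ i, 0 < q i)) :
    P.IsLDF := by
  classical
  intro hLD
  obtain ⟨S, hSne, -, hSbot, hSld⟩ := hLD
  set F := P.eval with hF
  have hmono : ∀ x y : Fin n → ℝ, (∀ i, 0 ≤ x i) → x ≤ y → F x ≤ F y :=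
    fun x y hx hxy i => (P.poly i).eval_mono' hx hxy
  have hFbox : ∀ x ∈ box01 n, F x ∈ box01 n := fun x hx i =>
    ⟨(P.poly i).eval_nonneg' (fun j => (hx j).1), (P.poly i).eval_le_one' hx⟩
  obtain ⟨i0, hi0⟩ := hSne
  rcases h with ⟨g, ⟨hgbox, hgfix, hgmax⟩, hglt⟩ | ⟨q, ⟨hqbox, hqfix, hqmin⟩, hqpos⟩
  · -- GFP case
    set g' : Fin n → ℝ := fun i => if i ∈ S then 1 else g i with hg'
    have hg'box : g' ∈ box01 n := fun i => by
      by_cases hi : i ∈ S <;> simp [hg', hi, (hgbox i).1, (hgbox i).2]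
    have hgle : g ≤ g' := fun i => by
      by_cases hi : i ∈ S <;> simp [hg', hi, (hgbox i).2]
    have hFg' : ∀ i ∈ S, F g' i = 1 := by
      intro i hi
      have hld := hSld i hi
      show (P.poly i).eval g' = 1
      rw [ProbPoly.eval]
      rw [Finset.sum_congr rfl (fun r _ => ?_), hld.2]
      by_cases hpr : (P.poly i).p r = 0
      · simp [hpr]
      · have hprod : ∏ j, g' j ^ (P.poly i).expo r j = 1 := by
          apply Finset.prod_eq_one
          intro j _
          by_cases he : (P.poly i).expo r j = 0
          · simp [he]
          · have hjS : j ∈ S := hSbot i hi j ⟨r, hpr, he⟩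
            simp [hg', hjS]
        rw [hprod, mul_one]
    have hg'post : g' ≤ F g' := by
      intro i
      by_cases hi : i ∈ S
      · rw [hFg' i hi]; simp [hg', hi]
      · have : g i ≤ F g' i := by
          calc g i = F g i := (congrFun hgfix i).symm
          _ ≤ F g' i := hmono g g' (fun j => (hgbox j).1) hgle i
        simpa [hg', hi] using this
    -- Tarski: sup of postfixed points
    set D : Set (Fin n → ℝ) := {x | x ∈ box01 n ∧ x ≤ F x} with hD
    have hg'D : g' ∈ D := ⟨hg'box, hg'post⟩
    set u : Fin n → ℝ := fun i => sSup ((fun x : Fin n → ℝ => x i) '' D) with hu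
    have hne : ∀ i : Fin n, ((fun x : Fin n → ℝ => x i) '' D).Nonempty :=
      fun i => ⟨g' i, g', hg'D, rfl⟩
    have hbdd : ∀ i : Fin n, BddAbove ((fun x : Fin n → ℝ => x i) '' D) := by
      intro i
      refine ⟨1, ?_⟩
      rintro y ⟨x, hx, rfl⟩
      exact (hx.1 i).2
    have hDu : ∀ x ∈ D, x ≤ u := fun x hx i => le_csSup (hbdd i) ⟨x, hx, rfl⟩
    have hubox : u ∈ box01 n := fun i =>
      ⟨le_trans (hg'box i).1 (hDu g' hg'D i),
       csSup_le (hne i) (by rintro y ⟨x, hx, rfl⟩; exact (hx.1 i).2)⟩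
    have hupost : u ≤ F u := by
      intro i
      apply csSup_le (hne i)
      rintro y ⟨x, hx, rfl⟩
      exact le_trans (hx.2 i) (hmono x u (fun j => (hx.1 j).1) (hDu x hx) i)
    have hFuD : F u ∈ D :=
      ⟨hFbox u hubox, hmono u (F u) (fun j => (hubox j).1) hupost⟩
    have hufix : F u = u :=
      funext fun i => le_antisymm (hDu (F u) hFuD i) (hupost i)
    have hule : u ≤ g := hgmax u hubox hufix
    have : (1 : ℝ) ≤ g i0 := by
      have h1 : (1 : ℝ) = g' i0 := by simp [hg', hi0]
      calc (1 : ℝ) = g' i0 := h1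
      _ ≤ u i0 := hDu g' hg'D i0
      _ ≤ g i0 := hule i0
    exact absurd this (not_le.mpr (hglt i0))
  · -- LFP case
    set q' : Fin n → ℝ := fun i => if i ∈ S then 0 else q i with hq'
    have hq'box : q' ∈ box01 n := fun i => by
      by_cases hi : i ∈ S <;> simp [hq', hi, (hqbox i).1, (hqbox i).2]
    have hq'le : q' ≤ q := fun i => by
      by_cases hi : i ∈ S <;> simp [hq', hi, (hqbox i).1]
    have hFq' : ∀ i ∈ S, F q' i = 0 := by
      intro i hi
      have hld := hSld i hi
      show (P.poly i).eval q' = 0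
      rw [ProbPoly.eval]
      apply Finset.sum_eq_zero
      intro r _
      by_cases hpr : (P.poly i).p r = 0
      · simp [hpr]
      · have hdeg := hld.1 r hpr
        have : ∃ j, (P.poly i).expo r j ≠ 0 := by
          by_contra hcon
          push_neg at hcon
          simp [hcon] at hdeg
        obtain ⟨j, hj⟩ := this
        have hjS : j ∈ S := hSbot i hi j ⟨r, hpr, hj⟩
        have : ∏ k, q' k ^ (P.poly i).expo r k = 0 := by
          apply Finset.prod_eq_zero (Finset.mem_univ j)
          simp [hq', hjS, zero_pow hj]
        rw [this, mul_zero]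
    have hq'pre : F q' ≤ q' := by
      intro i
      by_cases hi : i ∈ S
      · rw [hFq' i hi]; simp [hq', hi]
      · have : F q' i ≤ q i :=
          le_trans (hmono q' q (fun j => (hq'box j).1) hq'le i)
            (le_of_eq (congrFun hqfix i))
        simpa [hq', hi] using this
    set D : Set (Fin n → ℝ) := {x | x ∈ box01 n ∧ F x ≤ x} with hD
    have hq'D : q' ∈ D := ⟨hq'box, hq'pre⟩
    set l : Fin n → ℝ := fun i => sInf ((fun x : Fin n → ℝ => x i) '' D) with hl
    have hne : ∀ i : Fin n, ((fun x : Fin n → ℝ => x i) '' D).Nonempty :=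
      fun i => ⟨q' i, q', hq'D, rfl⟩
    have hbdd : ∀ i : Fin n, BddBelow ((fun x : Fin n → ℝ => x i) '' D) := by
      intro i
      refine ⟨0, ?_⟩
      rintro y ⟨x, hx, rfl⟩
      exact (hx.1 i).1
    have hDl : ∀ x ∈ D, l ≤ x := fun x hx i => csInf_le (hbdd i) ⟨x, hx, rfl⟩
    have hlbox : l ∈ box01 n := fun i =>
      ⟨le_csInf (hne i) (by rintro y ⟨x, hx, rfl⟩; exact (hx.1 i).1),
       le_trans (hDl q' hq'D i) (hq'box i).2⟩
    have hlpre : F l ≤ l := by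
      intro i
      apply le_csInf (hne i)
      rintro y ⟨x, hx, rfl⟩
      exact le_trans (hmono l x (fun j => (hlbox j).1) (hDl x hx) i) (hx.2 i)
    have hFlD : F l ∈ D :=
      ⟨hFbox l hlbox, hmono (F l) l (fun j => (hFbox l hlbox j).1) hlpre⟩
    have hlfix : F l = l :=
      funext fun i => le_antisymm (hlpre i) (hDl (F l) hFlD i)
    have hqle : q ≤ l := hqmin l hlbox hlfix
    have : q i0 ≤ 0 := by
      calc q i0 ≤ l i0 := hqle i0
      _ ≤ q' i0 := hDl q' hq'D i0
      _ = 0 := by simp [hq', hi0]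
    exact absurd this (not_le.mpr (hqpos i0))
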